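/- Let K be a number field with r₁ real embeddings and r₂ pairs of complex-conjugate (non-real) embeddings. Call a unit u of the ring of integers 𝒪_K totally positive if φ(u) > 0 for every ring homomorphism φ : K → ℝ. Then: (a) the totally positive units form a subgroup of finite index in the unit group 𝒪_K^×; and (b) if r₂ ≥ 2, then for every subgroup U of 𝒪_K^× that can be generated by at most r₁ elements, the image of the set of totally positive units under the quotient map 𝒪_K^× → 𝒪_K^×/U is infinite. (This is the arithmetic input, via Dirichlet's unit theorem, behind the paper's construction of non-Kähler compact complex manifolds X(K,U) associated to number fields: since the unit rank is r₁ + r₂ − 1 and an admissible group U has rank r₁, for r₂ ≥ 2 the quotient 𝒪_K^{×,+}/U yields infinitely many automorphisms of X(K,U) with infinite transverse order.) -/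

import Mathlib

open NumberField

section aux

variable (K : Type*) [Field K] [NumberField K]

/-- Real embeddings correspond to real complex embeddings. -/
noncomputable def realEmbEquivAux :
    (K →+* ℝ) ≃ {φ : K →+* ℂ // NumberField.ComplexEmbedding.IsReal φ} where
  toFun ψ := ⟨Complex.ofRealHom.comp ψ, by
    rw [NumberField.ComplexEmbedding.isReal_iff]
    ext x
    simp [Complex.conj_ofReal]⟩
  invFun φ := φ.2.embedding
  left_inv ψ := by
    ext x
    exact Complex.ofReal_re (ψ x)
  right_inv φ := by
    ext x
    exact NumberField.ComplexEmbedding.IsReal.coe_embedding_apply φ.2 x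

lemma card_realEmb : Nat.card (K →+* ℝ) = NumberField.InfinitePlace.nrRealPlaces K := by
  classical
  rw [Nat.card_congr ((realEmbEquivAux K).trans NumberField.InfinitePlace.mkReal),
    Nat.card_eq_fintype_card]

/-- The subgroup of totally positive units. -/
def totPos : Subgroup (𝓞 K)ˣ where
  carrier := {u : (𝓞 K)ˣ | ∀ φ : K →+* ℝ, 0 < φ (algebraMap (𝓞 K) K (u : 𝓞 K))}
  one_mem' := by intro φ; simp
  mul_mem' := by
    intro a b ha hb φ
    have : ((a * b : (𝓞 K)ˣ) : 𝓞 K) = (a : 𝓞 K) * (b : 𝓞 K) := rfl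
    rw [this, map_mul, map_mul]
    exact mul_pos (ha φ) (hb φ)
  inv_mem' := by
    intro a ha φ
    have h1 : ((a⁻¹ : (𝓞 K)ˣ) : 𝓞 K) * (a : 𝓞 K) = 1 := a.inv_mul
    have h2 : φ (algebraMap (𝓞 K) K ((a⁻¹ : (𝓞 K)ˣ) : 𝓞 K)) *
        φ (algebraMap (𝓞 K) K (a : 𝓞 K)) = 1 := by
      rw [← map_mul, ← map_mul, h1, map_one, map_one]
    nlinarith [ha φ]

lemma mem_totPos {u : (𝓞 K)ˣ} : u ∈ totPos K ↔
    ∀ φ : K →+* ℝ, 0 < φ (algebraMap (𝓞 K) K (u : 𝓞 K)) := Iff.rfl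

lemma val_prod (u v : (𝓞 K)ˣ) (φ : K →+* ℝ) :
    φ (algebraMap (𝓞 K) K ((u * v : (𝓞 K)ˣ) : 𝓞 K)) =
    φ (algebraMap (𝓞 K) K (u : 𝓞 K)) * φ (algebraMap (𝓞 K) K (v : 𝓞 K)) := by
  rw [show ((u * v : (𝓞 K)ˣ) : 𝓞 K) = (u : 𝓞 K) * (v : 𝓞 K) from rfl, map_mul, map_mul]

lemma val_unit_mul_inv (u : (𝓞 K)ˣ) (φ : K →+* ℝ) :
    φ (algebraMap (𝓞 K) K ((u⁻¹ : (𝓞 K)ˣ) : 𝓞 K)) *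
    φ (algebraMap (𝓞 K) K (u : 𝓞 K)) = 1 := by
  rw [← map_mul, ← map_mul, show ((u⁻¹ : (𝓞 K)ˣ) : 𝓞 K) * (u : 𝓞 K) = 1 from u.inv_mul,
    map_one, map_one]

instance finiteQuotTotPos : Finite ((𝓞 K)ˣ ⧸ totPos K) := by
  let f : ((𝓞 K)ˣ ⧸ totPos K) → ((K →+* ℝ) → Bool) :=
    Quotient.lift (fun u : (𝓞 K)ˣ => fun φ => decide (0 < φ (algebraMap (𝓞 K) K (u : 𝓞 K))))
      (by
        intro a b hab
        have hab2 : a⁻¹ * b ∈ totPos K := QuotientGroup.leftRel_apply.mp hab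
        funext φ
        have key := hab2 φ
        have hmul := val_prod K a⁻¹ b φ
        have hinv := val_unit_mul_inv K a φ
        have ha : 0 < φ (algebraMap (𝓞 K) K (a : 𝓞 K)) ↔
            0 < φ (algebraMap (𝓞 K) K (b : 𝓞 K)) := by
          constructor <;> intro h <;> nlinarith
        simp [ha])
  have hinj : Function.Injective f := by
    intro x y
    induction x using Quotient.inductionOn with | h a =>
    induction y using Quotient.inductionOn with | h b =>
    intro h
    have h' : ∀ φ : K →+* ℝ, (0 < φ (algebraMap (𝓞 K) K (a : 𝓞 K)) ↔
        0 < φ (algebraMap (𝓞 K) K (b : 𝓞 K))) := by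
      intro φ
      have := congrFun h φ
      simpa [f] using this
    apply Quotient.sound
    refine QuotientGroup.leftRel_apply.mpr ?_
    intro φ
    have hmul := val_prod K a⁻¹ b φ
    have hinv := val_unit_mul_inv K a φ
    have hb : φ (algebraMap (𝓞 K) K (b : 𝓞 K)) ≠ 0 := by
      have := val_unit_mul_inv K b φ
      intro h0; rw [h0, mul_zero] at this; norm_num at this
    have ha : φ (algebraMap (𝓞 K) K (a : 𝓞 K)) ≠ 0 := by
      intro h0; rw [h0, mul_zero] at hinv; norm_num at hinv
    rcases lt_or_gt_of_ne ha with hlt | hgt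
    · have hblt : φ (algebraMap (𝓞 K) K (b : 𝓞 K)) < 0 := by
        rcases lt_or_gt_of_ne hb with hc | hc
        · exact hc
        · exact absurd ((h' φ).mpr hc) (not_lt.mpr hlt.le)
      nlinarith
    · have hbgt : 0 < φ (algebraMap (𝓞 K) K (b : 𝓞 K)) := (h' φ).mp hgt
      nlinarith
  exact Finite.of_injective f hinj

lemma totPos_finiteIndex : (totPos K).FiniteIndex :=
  Subgroup.finiteIndex_of_finite_quotient

end aux

theorem totally_positive_units_finite_index_and_infinite_image
    (K : Type*) [Field K] [NumberField K] :
    (∃ S : Subgroup (𝓞 K)ˣ,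
      (∀ u : (𝓞 K)ˣ, u ∈ S ↔
        ∀ φ : K →+* ℝ, 0 < φ (algebraMap (𝓞 K) K (u : 𝓞 K))) ∧
      S.FiniteIndex) ∧
    (2 ≤ NumberField.InfinitePlace.nrComplexPlaces K →
      ∀ U : Subgroup (𝓞 K)ˣ,
        (∃ T : Finset (𝓞 K)ˣ, T.card ≤ Nat.card (K →+* ℝ) ∧
          Subgroup.closure (T : Set (𝓞 K)ˣ) = U) →
        Set.Infinite
          ((QuotientGroup.mk : (𝓞 K)ˣ → (𝓞 K)ˣ ⧸ U) ''
            {u : (𝓞 K)ˣ | ∀ φ : K →+* ℝ, 0 < φ (algebraMap (𝓞 K) K (u : 𝓞 K))})) := by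
  constructor
  · exact ⟨totPos K, fun u => Iff.rfl, totPos_finiteIndex K⟩
  · intro h2 U ⟨T, hTcard, hTU⟩
    classical
    by_contra hfin'
    rw [Set.not_infinite] at hfin'
    -- the set is the coe of the image subgroup
    have hfin : ((Subgroup.map (QuotientGroup.mk' U) (totPos K)) :
        Set ((𝓞 K)ˣ ⧸ U)).Finite := by
      rw [Subgroup.coe_map, QuotientGroup.coe_mk']
      exact hfin'
    haveI : Finite (Subgroup.map (QuotientGroup.mk' U) (totPos K)) := hfin.to_subtype
    set n := Nat.card (Subgroup.map (QuotientGroup.mk' U) (totPos K)) with hn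
    have hnpos : 0 < n := Nat.card_pos
    -- every totally positive unit to the n lies in U
    have hSn : ∀ s : (𝓞 K)ˣ, s ∈ totPos K → s ^ n ∈ U := by
      intro s hs
      have hmem : (QuotientGroup.mk' U) s ∈
          Subgroup.map (QuotientGroup.mk' U) (totPos K) :=
        ⟨s, hs, rfl⟩
      have : (⟨(QuotientGroup.mk' U) s, hmem⟩ :
          Subgroup.map (QuotientGroup.mk' U) (totPos K)) ^ n = 1 := pow_card_eq_one'
      have h1 : ((QuotientGroup.mk' U) s) ^ n = 1 := by
        simpa using congrArg Subtype.val this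
      rw [← map_pow] at h1
      exact (QuotientGroup.eq_one_iff _).mp h1
    set m := (totPos K).index with hm
    have hmne : m ≠ 0 := (totPos_finiteIndex K).index_ne_zero
    have hGm : ∀ g : (𝓞 K)ˣ, g ^ m ∈ totPos K := fun g => Subgroup.pow_index_mem _ g
    -- log embedding
    let L : (𝓞 K)ˣ → ({w : InfinitePlace K // w ≠ NumberField.Units.dirichletUnitTheorem.w₀} → ℝ) :=
      fun u => Units.logEmbedding K (Additive.ofMul u)
    have Lmul : ∀ u v : (𝓞 K)ˣ, L (u * v) = L u + L v := by
      intro u v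
      show Units.logEmbedding K (Additive.ofMul (u * v)) = _
      rw [show Additive.ofMul (u * v) = Additive.ofMul u + Additive.ofMul v from rfl, map_add]
    have Lone : L 1 = 0 := by
      show Units.logEmbedding K (Additive.ofMul (1 : (𝓞 K)ˣ)) = 0
      rw [show Additive.ofMul (1 : (𝓞 K)ˣ) = 0 from rfl, map_zero]
    have Linv : ∀ u : (𝓞 K)ˣ, L u⁻¹ = - L u := by
      intro u
      show Units.logEmbedding K (Additive.ofMul u⁻¹) = _
      rw [show Additive.ofMul u⁻¹ = - Additive.ofMul u from rfl, map_neg]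
    have Lpow : ∀ (u : (𝓞 K)ˣ) (k : ℕ), L (u ^ k) = k • L u := by
      intro u k
      show Units.logEmbedding K (Additive.ofMul (u ^ k)) = _
      rw [show Additive.ofMul (u ^ k) = k • Additive.ofMul u from rfl, map_nsmul]
    let V := Submodule.span ℝ ((T.image L : Finset _) : Set ({w : InfinitePlace K // w ≠ NumberField.Units.dirichletUnitTheorem.w₀} → ℝ))
    have hU_V : ∀ u ∈ U, L u ∈ V := by
      intro u hu
      rw [← hTU] at hu
      induction hu using Subgroup.closure_induction with
      | mem x hx =>
        exact Submodule.subset_span (by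
          simp only [Finset.coe_image, Set.mem_image, Finset.mem_coe]
          exact ⟨x, hx, rfl⟩)
      | one => rw [Lone]; exact zero_mem V
      | mul x y hx hy ihx ihy => rw [Lmul]; exact add_mem ihx ihy
      | inv x hx ihx => rw [Linv]; exact neg_mem ihx
    have hsmul_cancel : ∀ (k : ℕ), k ≠ 0 →
        ∀ x : ({w : InfinitePlace K // w ≠ NumberField.Units.dirichletUnitTheorem.w₀} → ℝ),
        (k • x) ∈ V → x ∈ V := by
      intro k hk x hx
      have : x = (k : ℝ)⁻¹ • ((k : ℝ) • x) := by
        rw [smul_smul, inv_mul_cancel₀ (by exact_mod_cast hk), one_smul]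
      rw [this]
      refine Submodule.smul_mem V _ ?_
      rwa [← Nat.cast_smul_eq_nsmul ℝ k x] at hx
    have hS_V : ∀ s ∈ totPos K, L s ∈ V := by
      intro s hs
      have := hU_V (s ^ n) (hSn s hs)
      rw [Lpow] at this
      exact hsmul_cancel n hnpos.ne' _ this
    have hG_V : ∀ g : (𝓞 K)ˣ, L g ∈ V := by
      intro g
      have := hS_V (g ^ m) (hGm g)
      rw [Lpow] at this
      exact hsmul_cancel m hmne _ this
    -- hence V contains the unit lattice, so V = ⊤
    have hV_top : V = ⊤ := by
      rw [← top_le_iff, ← NumberField.Units.dirichletUnitTheorem.unitLattice_span_eq_top K]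
      rw [Submodule.span_le]
      rintro x ⟨a, -, rfl⟩
      exact hG_V a.toMul
    -- dimension count
    have hle : Module.finrank ℝ V ≤ T.card := by
      calc Module.finrank ℝ V ≤ (T.image L).card := finrank_span_finset_le_card _
        _ ≤ T.card := Finset.card_image_le
    have htop : Module.finrank ℝ V = NumberField.Units.rank K := by
      rw [hV_top, finrank_top, NumberField.Units.finrank_eq_rank]
    have hrank : NumberField.InfinitePlace.nrRealPlaces K + 1 ≤ NumberField.Units.rank K := by
      rw [NumberField.Units.rank, NumberField.InfinitePlace.card_eq_nrRealPlaces_add_nrComplexPlaces]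
      omega
    rw [card_realEmb] at hTcard
    omega
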